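/- Let E and F be nonempty convex sets in ℝⁿ, with E ≠ ℝⁿ and F ≠ ℝⁿ, such that every vector u ∈ ℝⁿ is uniquely expressible as u = y + z with y ∈ E, z ∈ F, and y · z = 0 (uniqueness meaning: if u = y₁ + z₁ = y₂ + z₂ with y₁, y₂ ∈ E, z₁, z₂ ∈ F, y₁ · z₁ = 0 and y₂ · z₂ = 0, then y₁ = y₂ and z₁ = z₂). Then E° ⊆ F and F° ⊆ E. -/
import Mathlib

open RealInnerProductSpace Pointwise

/-- The (negative) polar set of `X`. -/
def polarSet {n : ℕ} (X : Set (EuclideanSpace ℝ (Fin n))) : Set (EuclideanSpace ℝ (Fin n)) :=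
  {x | ∀ e ∈ X, ⟪x, e⟫ ≤ 0}

theorem polar_subset_of_unique_orthogonal_decomposition
    (n : ℕ) (E F : Set (EuclideanSpace ℝ (Fin n)))
    (hEne : E.Nonempty) (hEconv : Convex ℝ E)
    (hFne : F.Nonempty) (hFconv : Convex ℝ F)
    (hEuniv : E ≠ Set.univ) (hFuniv : F ≠ Set.univ)
(hex : ∀ u : EuclideanSpace ℝ (Fin n), ∃ y ∈ E, ∃ z ∈ F, ⟪y, z⟫ = 0 ∧ u = y + z)
    (huniq : ∀ u y₁ z₁ y₂ z₂ : EuclideanSpace ℝ (Fin n),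
      y₁ ∈ E → z₁ ∈ F → y₂ ∈ E → z₂ ∈ F →
      ⟪y₁, z₁⟫ = 0 → ⟪y₂, z₂⟫ = 0 →
      u = y₁ + z₁ → u = y₂ + z₂ → y₁ = y₂ ∧ z₁ = z₂) :
    polarSet E ⊆ F ∧ polarSet F ⊆ E := by
  constructor
  · intro x hx
    obtain ⟨y, hy, z, hz, hyz, hxd⟩ := hex x
    have h1 : ⟪x, y⟫ ≤ 0 := hx y hy
    have h2 : ⟪x, y⟫ = ⟪y, y⟫ := by
      rw [hxd, inner_add_left]
      have : ⟪z, y⟫ = 0 := by rw [real_inner_comm]; exact hyz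
      rw [this, add_zero]
    have hy0 : y = 0 := real_inner_self_nonpos.mp (h2 ▸ h1)
    rw [hxd, hy0, zero_add]
    exact hz
  · intro x hx
    obtain ⟨y, hy, z, hz, hyz, hxd⟩ := hex x
    have h1 : ⟪x, z⟫ ≤ 0 := hx z hz
    have h2 : ⟪x, z⟫ = ⟪z, z⟫ := by
      rw [hxd, inner_add_left, hyz, zero_add]
    have hz0 : z = 0 := real_inner_self_nonpos.mp (h2 ▸ h1)
    rw [hxd, hz0, add_zero]
    exact hy
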